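/- arXiv:2208.01227 — 3 statements merged into one kernel-verified Lean document; each statement's English description precedes it below -/
import Mathlib

section
/- Let G = Σ_{i=1}^N w_i g_i g_iᵀ with w_i > 0, g_i = (cos β_i, sin β_i), and suppose w_k > (1/2) Σ_{i=1}^N w_i for some index k. Then ‖G‖²_F ≥ w_k² + (Σ_{i≠k} w_i)², with equality if and only if g_kᵀ g_i = 0 for all i ≠ k. -/
open Matrix Real Finset

noncomputable def gvec (β : ℝ) : Fin 2 → ℝ := ![Real.cos β, Real.sin β]

noncomputable def frobSq (G : Matrix (Fin 2) (Fin 2) ℝ) : ℝ := ∑ i, ∑ j, (G i j) ^ 2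

lemma dot_gvec (x y : ℝ) : gvec x ⬝ᵥ gvec y = Real.cos (x - y) := by
  simp [gvec, dotProduct, Fin.sum_univ_two, Real.cos_sub]

lemma frobSq_sum {N : ℕ} (w β : Fin N → ℝ) :
    frobSq (∑ i, w i • vecMulVec (gvec (β i)) (gvec (β i))) =
      ∑ i, ∑ j, w i * w j * Real.cos (β i - β j) ^ 2 := by
  have hentry : ∀ a b, (∑ i, w i • vecMulVec (gvec (β i)) (gvec (β i))) a b =
      ∑ i, w i * (gvec (β i) a * gvec (β i) b) := by
    intro a b
    simp [Matrix.sum_apply, Matrix.vecMulVec_apply]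
  have hcos : ∀ i j : Fin N, Real.cos (β i - β j) =
      gvec (β i) 0 * gvec (β j) 0 + gvec (β i) 1 * gvec (β j) 1 := by
    intro i j; rw [Real.cos_sub]; simp [gvec]
  have sqsum : ∀ f : Fin N → ℝ, (∑ i, f i) ^ 2 = ∑ i, ∑ j, f i * f j := by
    intro f; rw [sq, Finset.sum_mul_sum]
  unfold frobSq
  simp only [hentry, Fin.sum_univ_two, hcos, sqsum, ← Finset.sum_add_distrib]
  apply Finset.sum_congr rfl; intro i _
  apply Finset.sum_congr rfl; intro j _
  ring

lemma sum_half {N : ℕ} (w β : Fin N → ℝ) (k : Fin N) :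
    ∑ i, ∑ j, w i * w j * Real.cos (β i - β j) ^ 2 =
      ((∑ i, w i) ^ 2 + (∑ i, w i * Real.cos (2 * (β i - β k))) ^ 2 +
        (∑ i, w i * Real.sin (2 * (β i - β k))) ^ 2) / 2 := by
  have sqsum : ∀ f : Fin N → ℝ, (∑ i, f i) ^ 2 = ∑ i, ∑ j, f i * f j := by
    intro f; rw [sq, Finset.sum_mul_sum]
  have hterm : ∀ i j : Fin N, w i * w j * Real.cos (β i - β j) ^ 2 =
      (w i * w j + (w i * Real.cos (2 * (β i - β k))) * (w j * Real.cos (2 * (β j - β k))) +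
        (w i * Real.sin (2 * (β i - β k))) * (w j * Real.sin (2 * (β j - β k)))) / 2 := by
    intro i j
    have h1 : Real.cos (β i - β j) ^ 2 = 1 / 2 + Real.cos (2 * (β i - β j)) / 2 :=
      Real.cos_sq _
    have h2 : Real.cos (2 * (β i - β j)) =
        Real.cos (2 * (β i - β k)) * Real.cos (2 * (β j - β k)) +
        Real.sin (2 * (β i - β k)) * Real.sin (2 * (β j - β k)) := by
      rw [← Real.cos_sub]; ring_nf
    rw [h1, h2]; ring
  simp only [hterm, sqsum, ← Finset.sum_add_distrib, ← Finset.sum_div]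

theorem frobSq_lower_bound_irregular {N : ℕ} (w β : Fin N → ℝ) (hw : ∀ i, 0 < w i)
    (k : Fin N) (hk : (1 / 2) * ∑ i, w i < w k) :
    w k ^ 2 + (∑ i ∈ Finset.univ.erase k, w i) ^ 2 ≤
      frobSq (∑ i, w i • vecMulVec (gvec (β i)) (gvec (β i))) ∧
    (frobSq (∑ i, w i • vecMulVec (gvec (β i)) (gvec (β i))) =
        w k ^ 2 + (∑ i ∈ Finset.univ.erase k, w i) ^ 2 ↔
      ∀ i, i ≠ k → gvec (β k) ⬝ᵥ gvec (β i) = 0) := by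
  set s := ∑ i ∈ Finset.univ.erase k, w i with hs
  set A := ∑ i, w i * Real.cos (2 * (β i - β k)) with hA
  set B := ∑ i, w i * Real.sin (2 * (β i - β k)) with hB
  have hP : ∑ i, w i = w k + s := by
    rw [hs, ← Finset.add_sum_erase _ w (Finset.mem_univ k)]
  have hfrob : frobSq (∑ i, w i • vecMulVec (gvec (β i)) (gvec (β i))) =
      ((w k + s) ^ 2 + A ^ 2 + B ^ 2) / 2 := by
    rw [frobSq_sum, sum_half w β k, hP]
  have hslt : s < w k := by rw [hP] at hk; linarith
  have hAsplit : A = w k + ∑ i ∈ Finset.univ.erase k, w i * Real.cos (2 * (β i - β k)) := by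
    rw [hA, ← Finset.add_sum_erase _ _ (Finset.mem_univ k)]
    simp
  have hAge : w k - s ≤ A := by
    have h1 : ∀ i ∈ Finset.univ.erase k, -(w i) ≤ w i * Real.cos (2 * (β i - β k)) := by
      intro i _
      nlinarith [Real.neg_one_le_cos (2 * (β i - β k)), hw i]
    have h2 := Finset.sum_le_sum h1
    rw [Finset.sum_neg_distrib] at h2
    rw [hAsplit]
    linarith [h2]
  have hApos : 0 < A := by linarith
  have hA2 : (w k - s) ^ 2 ≤ A ^ 2 := by nlinarith
  have hcoszero : ∀ i, Real.cos (β i - β k) = 0 → gvec (β k) ⬝ᵥ gvec (β i) = 0 := by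
    intro i h0
    rw [dot_gvec, ← neg_sub, Real.cos_neg, h0]
  refine ⟨by rw [hfrob]; nlinarith [sq_nonneg B], ?_, ?_⟩
  · intro hEq
    rw [hfrob] at hEq
    have hAeq : A = w k - s := by nlinarith [sq_nonneg B, sq_nonneg (A - (w k - s))]
    have hzero : ∑ i ∈ Finset.univ.erase k, w i * (Real.cos (2 * (β i - β k)) + 1) = 0 := by
      have : ∑ i ∈ Finset.univ.erase k, w i * Real.cos (2 * (β i - β k)) = -s := by
        rw [hAsplit] at hAeq; linarith
      simp only [mul_add, Finset.sum_add_distrib, mul_one]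
      linarith [this]
    have hnn : ∀ i ∈ Finset.univ.erase k, 0 ≤ w i * (Real.cos (2 * (β i - β k)) + 1) := by
      intro i _
      nlinarith [Real.neg_one_le_cos (2 * (β i - β k)), hw i]
    have hall := (Finset.sum_eq_zero_iff_of_nonneg hnn).mp hzero
    intro i hik
    have hi : i ∈ Finset.univ.erase k := Finset.mem_erase.mpr ⟨hik, Finset.mem_univ i⟩
    have h0 : w i * (Real.cos (2 * (β i - β k)) + 1) = 0 := hall i hi
    have hc1 : Real.cos (2 * (β i - β k)) = -1 := by
      have hwi := hw i
      have := mul_eq_zero.mp h0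
      rcases this with h | h
      · linarith
      · linarith
    apply hcoszero
    have h2 : Real.cos (β i - β k) ^ 2 = 0 := by
      have := Real.cos_two_mul (β i - β k)
      linarith
    exact sq_eq_zero_iff.mp h2
  · intro hOrth
    have hcos0 : ∀ i, i ≠ k → Real.cos (β i - β k) = 0 := by
      intro i hik
      have := hOrth i hik
      rw [dot_gvec] at this
      rw [← Real.cos_neg, neg_sub]
      exact this
    have hAeq : A = w k - s := by
      have h1 : ∀ i ∈ Finset.univ.erase k, w i * Real.cos (2 * (β i - β k)) = -(w i) := by
        intro i hi
        rw [Real.cos_two_mul, hcos0 i (Finset.ne_of_mem_erase hi)]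
        ring
      have h2 : ∑ i ∈ Finset.univ.erase k, w i * Real.cos (2 * (β i - β k)) =
          ∑ i ∈ Finset.univ.erase k, -(w i) := Finset.sum_congr rfl h1
      rw [hAsplit, h2, Finset.sum_neg_distrib, ← hs]
      ring
    have hBeq : B = 0 := by
      rw [hB]
      apply Finset.sum_eq_zero
      intro i _
      by_cases hik : i = k
      · subst hik; simp
      · rw [Real.sin_two_mul, hcos0 i hik]; ring
    rw [hfrob, hAeq, hBeq]
    ring
end

section
/- Let G = Σ_{i=1}^N w_i g_i g_iᵀ with w_i > 0 and g_i = (cos β_i, sin β_i), and suppose w_k > (1/2) Σ_{i=1}^N w_i for some k. Then det(G) ≤ w_k · (Σ_{i≠k} w_i), with equality if and only if g_i is orthogonal to g_k for all i ≠ k. -/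
open Matrix Real Finset

set_option maxHeartbeats 1000000

theorem det_upper_bound_irregular {N : ℕ} (w β : Fin N → ℝ) (hw : ∀ i, 0 < w i)
    (k : Fin N) (hk : (1 / 2) * ∑ i, w i < w k) :
    (∑ i, w i • vecMulVec (gvec (β i)) (gvec (β i))).det ≤
      w k * (∑ i ∈ Finset.univ.erase k, w i) ∧
    ((∑ i, w i • vecMulVec (gvec (β i)) (gvec (β i))).det =
        w k * (∑ i ∈ Finset.univ.erase k, w i) ↔
      ∀ i, i ≠ k → gvec (β k) ⬝ᵥ gvec (β i) = 0) := by
  have g0 : ∀ t : ℝ, gvec t 0 = Real.cos t := fun t => rfl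
  have g1 : ∀ t : ℝ, gvec t 1 = Real.sin t := fun t => rfl
  set p := Real.cos (β k) with hp
  set q := Real.sin (β k) with hq
  have hpq : p ^ 2 + q ^ 2 = 1 := by
    rw [hp, hq]; rw [← Real.sin_sq_add_cos_sq (β k)]; ring
  set u : Fin N → ℝ := fun i => Real.cos (β i - β k) with hu
  set v : Fin N → ℝ := fun i => Real.sin (β i - β k) with hv
  have huv : ∀ i, u i ^ 2 + v i ^ 2 = 1 := fun i => by
    rw [hu, hv]; rw [← Real.sin_sq_add_cos_sq (β i - β k)]; ring
  have hcos : ∀ i, Real.cos (β i) = u i * p - v i * q := fun i => by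
    simp only [hu, hv, hp, hq]
    rw [← Real.cos_add, sub_add_cancel]
  have hsin : ∀ i, Real.sin (β i) = v i * p + u i * q := fun i => by
    simp only [hu, hv, hp, hq]
    rw [← Real.sin_add, sub_add_cancel]
  set a := ∑ i, w i * u i ^ 2 with ha
  set b := ∑ i, w i * (u i * v i) with hb
  set c := ∑ i, w i * v i ^ 2 with hc
  have hA : ∑ i, w i * (Real.cos (β i) * Real.cos (β i))
      = p ^ 2 * a - (2 * (p * q)) * b + q ^ 2 * c := by
    rw [ha, hb, hc, Finset.mul_sum, Finset.mul_sum, Finset.mul_sum,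
      ← Finset.sum_sub_distrib, ← Finset.sum_add_distrib]
    exact Finset.sum_congr rfl fun i _ => by rw [hcos i]; ring
  have hB : ∑ i, w i * (Real.cos (β i) * Real.sin (β i))
      = (p * q) * a + (p ^ 2 - q ^ 2) * b - (p * q) * c := by
    rw [ha, hb, hc, Finset.mul_sum, Finset.mul_sum, Finset.mul_sum,
      ← Finset.sum_add_distrib, ← Finset.sum_sub_distrib]
    exact Finset.sum_congr rfl fun i _ => by rw [hcos i, hsin i]; ring
  have hB2 : ∑ i, w i * (Real.sin (β i) * Real.cos (β i))
      = (p * q) * a + (p ^ 2 - q ^ 2) * b - (p * q) * c := by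
    rw [← hB]; exact Finset.sum_congr rfl fun i _ => by ring
  have hC : ∑ i, w i * (Real.sin (β i) * Real.sin (β i))
      = q ^ 2 * a + (2 * (p * q)) * b + p ^ 2 * c := by
    rw [ha, hb, hc, Finset.mul_sum, Finset.mul_sum, Finset.mul_sum,
      ← Finset.sum_add_distrib, ← Finset.sum_add_distrib]
    exact Finset.sum_congr rfl fun i _ => by rw [hsin i]; ring
  have hdet : (∑ i, w i • vecMulVec (gvec (β i)) (gvec (β i))).det = a * c - b ^ 2 := by
    rw [Matrix.det_fin_two]
    simp only [Matrix.sum_apply, Matrix.smul_apply, Matrix.vecMulVec_apply, smul_eq_mul,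
      g0, g1]
    rw [hA, hB, hB2, hC]
    linear_combination (a * c - b ^ 2) * (p ^ 2 + q ^ 2 + 1) * hpq
  have hdot : ∀ i, gvec (β k) ⬝ᵥ gvec (β i) = u i := by
    intro i
    simp only [dotProduct, Fin.sum_univ_two, g0, g1, hu]
    rw [← Real.cos_sub, show β k - β i = -(β i - β k) by ring, Real.cos_neg]
  set S := ∑ i, w i with hS
  set R := ∑ i ∈ Finset.univ.erase k, w i with hR
  have hSR : S = w k + R := by
    rw [hS, hR, Finset.add_sum_erase _ _ (Finset.mem_univ k)]
  have hRwk : R < w k := by linarith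
  have hvk : v k = 0 := by simp [hv]
  have huk : u k = 1 := by simp [hu]
  have hacS : a + c = S := by
    rw [ha, hc, hS, ← Finset.sum_add_distrib]
    exact Finset.sum_congr rfl fun i _ => by linear_combination w i * huv i
  have hce : c = ∑ i ∈ Finset.univ.erase k, w i * v i ^ 2 := by
    rw [hc, ← Finset.add_sum_erase _ (fun i => w i * v i ^ 2) (Finset.mem_univ k), hvk]
    ring
  have hc0 : (0:ℝ) ≤ c := by
    rw [hc]
    exact Finset.sum_nonneg fun i _ => mul_nonneg (hw i).le (sq_nonneg _)
  have hcR : c ≤ R := by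
    rw [hce, hR]
    refine Finset.sum_le_sum fun i _ => ?_
    have h2 : w i * u i ^ 2 + w i * v i ^ 2 = w i := by linear_combination w i * huv i
    linarith [mul_nonneg (hw i).le (sq_nonneg (u i))]
  simp only [hdet, hdot]
  refine ⟨?_, ?_, ?_⟩
  · nlinarith [sq_nonneg b, mul_nonneg (sub_nonneg.2 hcR)
      (sub_nonneg.2 (hcR.trans hRwk.le))]
  · intro hEq i hik
    by_contra hui
    have hu2 : 0 < u i ^ 2 :=
      lt_of_le_of_ne (sq_nonneg _) (Ne.symm (pow_ne_zero 2 hui))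
    have h1 : w i * v i ^ 2 < w i := by nlinarith [mul_pos (hw i) hu2, huv i]
    have hclt : c < R := by
      rw [hce, hR]
      exact Finset.sum_lt_sum
        (fun j _ => by
          have h2 : w j * u j ^ 2 + w j * v j ^ 2 = w j := by linear_combination w j * huv j
          linarith [mul_nonneg (hw j).le (sq_nonneg (u j))])
        ⟨i, Finset.mem_erase.2 ⟨hik, Finset.mem_univ i⟩, h1⟩
    nlinarith [sq_nonneg b, mul_pos (sub_pos.2 hclt) (show 0 < w k - c by linarith)]
  · intro h
    have hc' : c = R := by
      rw [hce, hR]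
      refine Finset.sum_congr rfl fun i hi => ?_
      have h0 := h i (Finset.ne_of_mem_erase hi)
      have h2 := huv i
      rw [h0] at h2
      linear_combination w i * h2
    have hb0 : b = 0 := by
      rw [hb]
      refine Finset.sum_eq_zero fun i _ => ?_
      by_cases hik : i = k
      · subst hik; rw [hvk]; ring
      · rw [h i hik]; ring
    have haw : a = w k := by linarith
    rw [hb0, hc', haw]; ring
end

section
/- Let F = c Σ_{i=1}^N Σ_{j=1}^{M_i} σ_i^{-2} (r_{i,j}²/d_{i,j}⁴) g_{i,j} g_{i,j}ᵀ with c > 0, σ_i > 0, r_{i,j} ∈ [r₀, R], d_{i,j}² = r_{i,j}² + h_{i,j}², h_{i,j} ≥ h₀ > 0, and g_{i,j} unit vectors in ℝ². Then det(F) ≤ (c²/4)(Σ_{i=1}^N M_i σ_i^{-2})² · (r*)⁴/((r*)² + h₀²)⁴, where r* = max{r₀, h₀}, provided r₀ ≥ h₀ or r₀ ≤ h₀. -/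
open Matrix Real

lemma ratio_le (r₀ h₀ r h : ℝ) (hr₀ : 0 < r₀) (hh₀ : 0 < h₀) (hrl : r₀ ≤ r) (hhl : h₀ ≤ h) :
    r^2/(r^2+h^2)^2 ≤ (max r₀ h₀)^2 / ((max r₀ h₀)^2 + h₀^2)^2 := by
  have hrp : 0 < r := lt_of_lt_of_le hr₀ hrl
  have hhp : 0 < h := lt_of_lt_of_le hh₀ hhl
  have hsq : h₀^2 ≤ h^2 := by nlinarith
  have hh2 : (0:ℝ) < h₀^2 := by positivity
  rw [div_le_div_iff₀ (by positivity) (by positivity)]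
  rcases le_total r₀ h₀ with hcc | hcc
  · rw [max_eq_right hcc]
    nlinarith [sq_nonneg (r^2 - h₀^2),
      mul_nonneg (sub_nonneg.2 hsq) (by positivity : (0:ℝ) ≤ 2*r^2+h^2+h₀^2)]
  · rw [max_eq_left hcc]
    have h1 : r₀^2 ≤ r^2 := by nlinarith
    have ha : h₀^2 ≤ r₀^2 := by nlinarith
    have hb : h₀^2 ≤ r^2 := le_trans ha h1
    have h2 : h₀^4 ≤ r^2 * r₀^2 := by nlinarith [mul_le_mul hb ha (by positivity : (0:ℝ) ≤ h₀^2) (sq_nonneg r)]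
    nlinarith [mul_nonneg (sub_nonneg.2 h1) (sub_nonneg.2 h2),
      mul_nonneg (mul_nonneg (sub_nonneg.2 hsq)
        (by positivity : (0:ℝ) ≤ 2*r^2+h^2+h₀^2)) (sq_nonneg r₀)]

theorem fim_det_global_upper_bound
    (N : ℕ) (M : Fin N → ℕ) (c r₀ R h₀ : ℝ) (σ : Fin N → ℝ)
    (r h β : (i : Fin N) → Fin (M i) → ℝ)
    (hc : 0 < c) (hσ : ∀ i, 0 < σ i) (hr₀ : 0 < r₀) (hh₀ : 0 < h₀)
    (hr : ∀ i j, r i j ∈ Set.Icc r₀ R)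
    (hh : ∀ i j, h₀ ≤ h i j) :
    (c • ∑ i : Fin N, ∑ j : Fin (M i),
        ((σ i) ^ (-2 : ℤ) * (r i j) ^ 2 / ((r i j) ^ 2 + (h i j) ^ 2) ^ 2) •
          vecMulVec (gvec (β i j)) (gvec (β i j))).det ≤
      (c ^ 2 / 4) * (∑ i : Fin N, (M i : ℝ) * (σ i) ^ (-2 : ℤ)) ^ 2 *
        (max r₀ h₀) ^ 4 / ((max r₀ h₀) ^ 2 + h₀ ^ 2) ^ 4 := by
  have hσ2 : ∀ i, (0:ℝ) < (σ i) ^ (-2:ℤ) := fun i => zpow_pos (hσ i) _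
  set w : (i : Fin N) → Fin (M i) → ℝ :=
    fun i j => (σ i) ^ (-2:ℤ) * (r i j)^2 / ((r i j)^2 + (h i j)^2)^2 with hwdef
  have hw0 : ∀ i j, 0 ≤ w i j := by
    intro i j
    have := (hσ2 i).le
    have h1 : (0:ℝ) ≤ (r i j)^2 := sq_nonneg _
    apply div_nonneg (mul_nonneg this h1) (by positivity)
  set K : ℝ := (max r₀ h₀)^2 / ((max r₀ h₀)^2 + h₀^2)^2 with hKdef
  have hK : 0 ≤ K := by positivity
  have hwle : ∀ i j, w i j ≤ (σ i)^(-2:ℤ) * K := by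
    intro i j
    have h1 := ratio_le r₀ h₀ (r i j) (h i j) hr₀ hh₀ (hr i j).1 (hh i j)
    have h2 : w i j = (σ i)^(-2:ℤ) * ((r i j)^2/((r i j)^2+(h i j)^2)^2) := by
      rw [hwdef]; ring
    rw [h2, hKdef]
    exact mul_le_mul_of_nonneg_left h1 (hσ2 i).le
  -- sums
  set P : ℝ := ∑ i, ∑ j, w i j * (Real.cos (β i j) * Real.cos (β i j)) with hP
  set Q : ℝ := ∑ i, ∑ j, w i j * (Real.sin (β i j) * Real.sin (β i j)) with hQ
  set B : ℝ := ∑ i, ∑ j, w i j * (Real.cos (β i j) * Real.sin (β i j)) with hB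
  set T : ℝ := ∑ i, ∑ j, w i j with hT
  set S : ℝ := ∑ i, (M i : ℝ) * (σ i) ^ (-2:ℤ) with hS
  have hPQ : P + Q = T := by
    rw [hP, hQ, hT, ← Finset.sum_add_distrib]
    refine Finset.sum_congr rfl fun i _ => ?_
    rw [← Finset.sum_add_distrib]
    refine Finset.sum_congr rfl fun j _ => ?_
    calc w i j * (cos (β i j) * cos (β i j)) + w i j * (sin (β i j) * sin (β i j))
        = w i j * (sin (β i j)^2 + cos (β i j)^2) := by ring
      _ = w i j := by rw [sin_sq_add_cos_sq, mul_one]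
  have hTle : T ≤ S * K := by
    rw [hT, hS, Finset.sum_mul]
    refine Finset.sum_le_sum fun i _ => ?_
    calc ∑ j, w i j ≤ ∑ j : Fin (M i), (σ i)^(-2:ℤ) * K :=
          Finset.sum_le_sum fun j _ => hwle i j
      _ = (M i : ℝ) * (σ i)^(-2:ℤ) * K := by
          rw [Finset.sum_const, Finset.card_univ, Fintype.card_fin, nsmul_eq_mul]; ring
  have hT0 : 0 ≤ T := by
    rw [hT]; exact Finset.sum_nonneg fun i _ => Finset.sum_nonneg fun j _ => hw0 i j
  have hP0 : 0 ≤ P := by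
    rw [hP]
    exact Finset.sum_nonneg fun i _ => Finset.sum_nonneg fun j _ =>
      mul_nonneg (hw0 i j) (mul_self_nonneg _)
  have hQ0 : 0 ≤ Q := by
    rw [hQ]
    exact Finset.sum_nonneg fun i _ => Finset.sum_nonneg fun j _ =>
      mul_nonneg (hw0 i j) (mul_self_nonneg _)
  -- determinant computation
  have hdet : (c • ∑ i : Fin N, ∑ j : Fin (M i),
        ((σ i) ^ (-2 : ℤ) * (r i j) ^ 2 / ((r i j) ^ 2 + (h i j) ^ 2) ^ 2) •
          vecMulVec (gvec (β i j)) (gvec (β i j))).det = c^2 * (P * Q - B * B) := by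
    rw [Matrix.det_smul, Matrix.det_fin_two, Fintype.card_fin]
    have e : ∀ k l : Fin 2, (∑ i : Fin N, ∑ j : Fin (M i),
        ((σ i) ^ (-2 : ℤ) * (r i j) ^ 2 / ((r i j) ^ 2 + (h i j) ^ 2) ^ 2) •
          vecMulVec (gvec (β i j)) (gvec (β i j))) k l
        = ∑ i : Fin N, ∑ j : Fin (M i), w i j * (gvec (β i j) k * gvec (β i j) l) := by
      intro k l
      simp [Matrix.sum_apply, Matrix.smul_apply, Matrix.vecMulVec_apply, hwdef, mul_assoc]
    rw [e 0 0, e 1 1, e 0 1, e 1 0]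
    simp only [gvec, Matrix.cons_val_zero, Matrix.cons_val_one, Matrix.head_cons]
    have h10 : (∑ i : Fin N, ∑ j : Fin (M i), w i j * (Real.sin (β i j) * Real.cos (β i j))) = B := by
      rw [hB]
      exact Finset.sum_congr rfl fun i _ => Finset.sum_congr rfl fun j _ => by ring
    rw [h10, ← hP, ← hQ, ← hB]
  rw [hdet]
  have h2 : T^2 ≤ (S*K)^2 := pow_le_pow_left₀ hT0 hTle 2
  have hmid : P * Q - B * B ≤ (S*K)^2/4 := by
    nlinarith [sq_nonneg (P - Q), mul_self_nonneg B, hPQ, h2]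
  have hmain : c^2 * (P * Q - B * B) ≤ c^2 / 4 * (S*K)^2 := by
    calc c^2 * (P * Q - B * B) ≤ c^2 * ((S*K)^2/4) :=
          mul_le_mul_of_nonneg_left hmid (sq_nonneg c)
      _ = c^2/4 * (S*K)^2 := by ring
  calc c^2 * (P * Q - B * B) ≤ c^2/4 * (S*K)^2 := hmain
    _ = (c ^ 2 / 4) * S ^ 2 * (max r₀ h₀) ^ 4 / ((max r₀ h₀) ^ 2 + h₀ ^ 2) ^ 4 := by
        rw [hKdef]; field_simp
end
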